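/- Let U = f(M) + ε with ε independent of (M, Y(0), Y(1)) and suppose T depends only on U (i.e., T ⟂ (M, Y(0), Y(1)) | U) and E[ε]=0. If in addition Y(t) ⟂ ε | M, then the conditional independence Y(t) ⟂ T | (M, ε) holds, so adjusting for (M, ε) identifies E[Y(t)]; however, Y(t) ⟂ T | M alone need not hold. Formally: Y(t) ⟂ T | (M, ε) follows from T ⟂ (M, Y(0), Y(1)) | U and U being a deterministic function of (M, ε). -/

import Mathlib

open Finset

noncomputable def pr {Ω : Type*} [Fintype Ω] (p : Ω → ℝ) (E : Set Ω) : ℝ :=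
  ∑ ω, E.indicator p ω

noncomputable def cpr {Ω : Type*} [Fintype Ω] (p : Ω → ℝ) (A B : Set Ω) : ℝ :=
  pr p (A ∩ B) / pr p B

noncomputable def ex {Ω : Type*} [Fintype Ω] (p : Ω → ℝ) (X : Ω → ℝ) : ℝ :=
  ∑ ω, p ω * X ω

noncomputable def cex {Ω : Type*} [Fintype Ω] (p : Ω → ℝ) (X : Ω → ℝ) (B : Set Ω) : ℝ :=
  (∑ ω, B.indicator (fun ω' => p ω' * X ω') ω) / pr p B

lemma pr_mono' {Ω : Type*} [Fintype Ω] (p : Ω → ℝ) (hp : ∀ ω, 0 ≤ p ω)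
    {A B : Set Ω} (h : A ⊆ B) : pr p A ≤ pr p B := by
  apply Finset.sum_le_sum
  intro ω _
  exact Set.indicator_le_indicator_of_subset h hp ω

lemma pr_empty' {Ω : Type*} [Fintype Ω] (p : Ω → ℝ) : pr p (∅ : Set Ω) = 0 := by
  simp [pr]

lemma pr_fiberwise' {Ω β : Type*} [Fintype Ω] [DecidableEq β] (p : Ω → ℝ) (X : Ω → β)
    (E : Set Ω) :
    pr p E = ∑ x ∈ Finset.univ.image X, pr p (E ∩ {ω | X ω = x}) := by
  classical
  unfold pr
  rw [Finset.sum_comm]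
  apply Finset.sum_congr rfl
  intro ω _
  rw [Finset.sum_eq_single (X ω)]
  · simp [Set.indicator_apply]
  · intro b _ hb
    simp [Set.indicator_apply]
    intro _ h
    exact absurd h.symm hb
  · intro h
    exact absurd (Finset.mem_image_of_mem X (Finset.mem_univ ω)) h

/-- Residual-confounding scenario: U = f(M) + ε with T ⟂ (M, Y(0), Y(1)) | U. Since U
is a deterministic function of the pair (M, ε), conditioning on (M, ε) yields the
conditional independence Y(t) ⟂ T | (M, ε). -/
theorem unconfoundedness_given_image_and_noise
    {Ω 𝓜 : Type*} [Fintype Ω]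
    (p : Ω → ℝ) (hp : ∀ ω, 0 ≤ p ω) (hsum : ∑ ω, p ω = 1)
    (M : Ω → 𝓜) (ε : Ω → ℝ) (f : 𝓜 → ℝ)
    (U : Ω → ℝ) (hU : ∀ ω, U ω = f (M ω) + ε ω)
    (T : Ω → Bool) (Y0 Y1 : Ω → ℝ)
    (hCI : ∀ (t : Bool) (x : 𝓜 × ℝ × ℝ) (u : ℝ), 0 < pr p {ω | U ω = u} →
      cpr p {ω | T ω = t ∧ (M ω, Y0 ω, Y1 ω) = x} {ω | U ω = u}
        = cpr p {ω | T ω = t} {ω | U ω = u}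
          * cpr p {ω | (M ω, Y0 ω, Y1 ω) = x} {ω | U ω = u}) :
    ∀ (t t' : Bool) (y : ℝ) (m : 𝓜) (e : ℝ),
      0 < pr p {ω | M ω = m ∧ ε ω = e} →
      cpr p {ω | (if t then Y1 ω else Y0 ω) = y ∧ T ω = t'} {ω | M ω = m ∧ ε ω = e}
        = cpr p {ω | (if t then Y1 ω else Y0 ω) = y} {ω | M ω = m ∧ ε ω = e}
          * cpr p {ω | T ω = t'} {ω | M ω = m ∧ ε ω = e} := by
  classical
  intro t t' y m e hB
  set u : ℝ := f m + e with hu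
  set B : Set Ω := {ω | M ω = m ∧ ε ω = e} with hBdef
  set C : Set Ω := {ω | U ω = u} with hCdef
  set X : Ω → 𝓜 × ℝ × ℝ := fun ω => (M ω, Y0 ω, Y1 ω) with hX
  -- B ⊆ C
  have hBC : B ⊆ C := by
    rintro ω ⟨hm, he⟩
    simp only [hCdef, Set.mem_setOf_eq, hU ω, hm, he, hu]
  have hC : 0 < pr p C := lt_of_lt_of_le hB (pr_mono' p hp hBC)
  set α : ℝ := cpr p {ω | T ω = t'} C with hα
  -- pointwise consequence of hCI
  have hpoint : ∀ x : 𝓜 × ℝ × ℝ,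
      pr p ({ω | T ω = t' ∧ X ω = x} ∩ C) = α * pr p ({ω | X ω = x} ∩ C) := by
    intro x
    have h := hCI t' x u hC
    have hCne : pr p C ≠ 0 := ne_of_gt hC
    calc pr p ({ω | T ω = t' ∧ X ω = x} ∩ C)
        = cpr p {ω | T ω = t' ∧ X ω = x} C * pr p C := (div_mul_cancel₀ _ hCne).symm
      _ = (α * cpr p {ω | X ω = x} C) * pr p C := by rw [h]
      _ = α * (cpr p {ω | X ω = x} C * pr p C) := by ring
      _ = α * pr p ({ω | X ω = x} ∩ C) := by rw [cpr, div_mul_cancel₀ _ hCne]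
  -- key lemma: for any predicate Q on values of X
  have key : ∀ Q : 𝓜 × ℝ × ℝ → Prop,
      pr p ({ω | T ω = t' ∧ Q (X ω)} ∩ C) = α * pr p ({ω | Q (X ω)} ∩ C) := by
    intro Q
    rw [pr_fiberwise' p X ({ω | T ω = t' ∧ Q (X ω)} ∩ C),
        pr_fiberwise' p X ({ω | Q (X ω)} ∩ C), Finset.mul_sum]
    apply Finset.sum_congr rfl
    intro x _
    by_cases hQ : Q x
    · have e1 : ({ω | T ω = t' ∧ Q (X ω)} ∩ C) ∩ {ω | X ω = x}
          = {ω | T ω = t' ∧ X ω = x} ∩ C := by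
        ext ω
        simp only [Set.mem_inter_iff, Set.mem_setOf_eq]
        constructor
        · rintro ⟨⟨⟨h1, _⟩, h2⟩, h3⟩; exact ⟨⟨h1, h3⟩, h2⟩
        · rintro ⟨⟨h1, h3⟩, h2⟩; exact ⟨⟨⟨h1, h3 ▸ hQ⟩, h2⟩, h3⟩
      have e2 : ({ω | Q (X ω)} ∩ C) ∩ {ω | X ω = x} = {ω | X ω = x} ∩ C := by
        ext ω
        simp only [Set.mem_inter_iff, Set.mem_setOf_eq]
        constructor
        · rintro ⟨⟨_, h2⟩, h3⟩; exact ⟨h3, h2⟩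
        · rintro ⟨h3, h2⟩; exact ⟨⟨h3 ▸ hQ, h2⟩, h3⟩

      rw [e1, e2, hpoint x]
    · have e1 : ({ω | T ω = t' ∧ Q (X ω)} ∩ C) ∩ {ω | X ω = x} = (∅ : Set Ω) := by
        ext ω
        simp only [Set.mem_inter_iff, Set.mem_setOf_eq, Set.mem_empty_iff_false, iff_false]
        rintro ⟨⟨⟨_, h2⟩, _⟩, h3⟩; exact hQ (h3 ▸ h2)
      have e2 : ({ω | Q (X ω)} ∩ C) ∩ {ω | X ω = x} = (∅ : Set Ω) := by
        ext ω
        simp only [Set.mem_inter_iff, Set.mem_setOf_eq, Set.mem_empty_iff_false, iff_false]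
        rintro ⟨⟨h2, _⟩, h3⟩; exact hQ (h3 ▸ h2)
      rw [e1, e2, pr_empty', mul_zero]
  -- membership translations: B-events as X-events intersected with C
  have mem_iff : ∀ ω, (M ω = m ∧ ε ω = e) ↔ (M ω = m ∧ U ω = u) := by
    intro ω
    constructor
    · rintro ⟨hm, he⟩; exact ⟨hm, by rw [hU ω, hm, he]⟩
    · rintro ⟨hm, hUω⟩
      refine ⟨hm, ?_⟩
      have := hU ω
      rw [hm] at this
      have : f m + ε ω = f m + e := by rw [← this, hUω]
      linarith
  set Yt : Ω → ℝ := fun ω => if t then Y1 ω else Y0 ω with hYt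
  set Q1 : 𝓜 × ℝ × ℝ → Prop :=
    fun x => x.1 = m ∧ (if t then x.2.2 else x.2.1) = y with hQ1
  set Q0 : 𝓜 × ℝ × ℝ → Prop := fun x => x.1 = m with hQ0
  have hYtX : ∀ ω, Yt ω = (if t then (X ω).2.2 else (X ω).2.1) := by
    intro ω; cases t <;> simp [hYt, hX]
  have eq1 : {ω | Yt ω = y ∧ T ω = t'} ∩ B = {ω | T ω = t' ∧ Q1 (X ω)} ∩ C := by
    ext ω
    simp only [Set.mem_inter_iff, Set.mem_setOf_eq, hBdef, hQ1, hX]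
    rw [hYtX ω]
    constructor
    · rintro ⟨⟨hy, hT⟩, hBω⟩
      exact ⟨⟨hT, ((mem_iff ω).mp hBω).1, hy⟩, ((mem_iff ω).mp hBω).2⟩
    · rintro ⟨⟨hT, hm, hy⟩, hCω⟩
      exact ⟨⟨hy, hT⟩, (mem_iff ω).mpr ⟨hm, hCω⟩⟩
  have eq2 : {ω | Yt ω = y} ∩ B = {ω | Q1 (X ω)} ∩ C := by
    ext ω
    simp only [Set.mem_inter_iff, Set.mem_setOf_eq, hBdef, hQ1, hX]
    rw [hYtX ω]
    constructor
    · rintro ⟨hy, hBω⟩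
      exact ⟨⟨((mem_iff ω).mp hBω).1, hy⟩, ((mem_iff ω).mp hBω).2⟩
    · rintro ⟨⟨hm, hy⟩, hCω⟩
      exact ⟨hy, (mem_iff ω).mpr ⟨hm, hCω⟩⟩
  have eq3 : {ω | T ω = t'} ∩ B = {ω | T ω = t' ∧ Q0 (X ω)} ∩ C := by
    ext ω
    simp only [Set.mem_inter_iff, Set.mem_setOf_eq, hBdef, hQ0, hX]
    constructor
    · rintro ⟨hT, hBω⟩
      exact ⟨⟨hT, ((mem_iff ω).mp hBω).1⟩, ((mem_iff ω).mp hBω).2⟩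
    · rintro ⟨⟨hT, hm⟩, hCω⟩
      exact ⟨hT, (mem_iff ω).mpr ⟨hm, hCω⟩⟩
  have eq4 : B = {ω | Q0 (X ω)} ∩ C := by
    ext ω
    simp only [Set.mem_inter_iff, Set.mem_setOf_eq, hBdef, hQ0, hX]
    constructor
    · intro hBω
      exact ⟨((mem_iff ω).mp hBω).1, ((mem_iff ω).mp hBω).2⟩
    · rintro ⟨hm, hCω⟩
      exact (mem_iff ω).mpr ⟨hm, hCω⟩
  have main1 : pr p ({ω | Yt ω = y ∧ T ω = t'} ∩ B) = α * pr p ({ω | Yt ω = y} ∩ B) := by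
    rw [eq1, eq2]; exact key Q1
  have main2 : pr p ({ω | T ω = t'} ∩ B) = α * pr p B := by
    rw [eq3]; conv_lhs => rw [key Q0]
    rw [← eq4]
  have hBne : pr p B ≠ 0 := ne_of_gt hB
  show cpr p {ω | Yt ω = y ∧ T ω = t'} B = cpr p {ω | Yt ω = y} B * cpr p {ω | T ω = t'} B
  simp only [cpr, main1, main2]
  field_simp
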